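/- Let n ≥ 1 and let a₁, …, a_n be real numbers. Let ρ₁, …, ρ_n be independent random variables, each taking the value 1 with probability 1/2 and the value 0 with probability 1/2. Then E[ |Σ_{i=1}^n ρ_i a_i| ] ≥ (Σ_{i=1}^n |a_i|) / √(8n). -/

import Mathlib

open Finset

-- weight-grouping lemma
lemma epa_sum_weight (n : ℕ) (f : ℕ → ℝ) :
    ∑ σ : Fin n → Bool, f (∑ i, if σ i then 1 else 0) =
      ∑ j ∈ Finset.range (n+1), (n.choose j : ℝ) * f j := by
  induction n generalizing f with
  | zero => simp
  | succ n ih =>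
    have key : ∑ σ : Fin (n+1) → Bool, f (∑ i, if σ i then 1 else 0)
        = ∑ p : Bool × (Fin n → Bool),
            f ((if p.1 then 1 else 0) + ∑ i, if p.2 i then 1 else 0) := by
      apply Fintype.sum_equiv ((Fin.consEquiv (fun _ : Fin (n+1) => Bool)).symm)
      intro σ
      congr 1
      rw [Fin.sum_univ_succ]
      rfl
    rw [key, Fintype.sum_prod_type, Fintype.sum_bool]
    simp only [if_true, Bool.false_eq_true, if_false, zero_add]
    rw [ih (fun j => f (1 + j)), ih f]
    -- now binomial algebra
    rw [Finset.sum_range_succ' (fun j => ((n+1).choose j : ℝ) * f j) (n+1)]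
    have h1 : ∀ i ∈ Finset.range (n+1),
        (((n+1).choose (i+1) : ℕ) : ℝ) * f (i+1)
          = (n.choose i : ℝ) * f (1+i) + (n.choose (i+1) : ℝ) * f (i+1) := by
      intro i _
      rw [Nat.choose_succ_succ]
      push_cast
      rw [add_comm 1 i]
      ring
    rw [Finset.sum_congr rfl h1, Finset.sum_add_distrib]
    have h2 : ∑ i ∈ Finset.range (n+1), (n.choose (i+1) : ℝ) * f (i+1)
        = ∑ j ∈ Finset.range (n+1), (n.choose j : ℝ) * f j - (n.choose 0 : ℝ) * f 0 := by
      rw [eq_sub_iff_add_eq, ← Finset.sum_range_succ' (fun j => (n.choose j : ℝ) * f j) (n+1),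
        Finset.sum_range_succ]
      simp [Nat.choose_eq_zero_of_lt]
    rw [h2]
    simp
    ring

lemma epa_dec (m j : ℕ) (hj : m/2 ≤ j) : m.choose (j+1) ≤ m.choose j := by
  rcases le_or_gt m j with h | h
  · rw [Nat.choose_eq_zero_of_lt (show m < j+1 by omega)]
    exact Nat.zero_le _
  rcases lt_or_ge (m - j - 1) (m/2) with h2 | h2
  · have e1 : (m+1-(j+1+1)) = m - j - 1 := by omega
    have e2 : m.choose (j+1) = m.choose (m - (j+1)) := by
      rw [← Nat.choose_symm (show j+1 ≤ m by omega)]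
    have e3 : m.choose j = m.choose (m - j) := by
      rw [← Nat.choose_symm (show j ≤ m by omega)]
    rw [e2, e3, show m - j = (m - j - 1) + 1 by omega, show m - (j+1) = m - j - 1 by omega]
    exact Nat.choose_le_succ_of_lt_half_left h2
  · have e : m - (j+1) = j := by omega
    rw [show m.choose (j+1) = m.choose (m - (j+1)) by rw [← Nat.choose_symm (show j+1 ≤ m by omega)], e]

lemma epa_G_id (m j : ℕ) (hj : j < m + 1) :
    ((m:ℝ)+1) * (m.choose j : ℝ) - ((m:ℝ)+1) * (m.choose (j+1) : ℝ)
      = ((2*(j:ℝ)+2) - ((m:ℝ)+1)) * (((m+1).choose (j+1) : ℕ) : ℝ) := by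
  have id1 : (j+1) * ((m+1).choose (j+1)) = (m+1) * m.choose j := by
    rw [mul_comm (j+1)]
    exact (Nat.add_one_mul_choose_eq m j).symm
  have id2 : (m - j) * ((m+1).choose (j+1)) = (m+1) * m.choose (j+1) := by
    have h1 : m.choose (j+1) * (j+1) = m.choose j * (m - j) := Nat.choose_succ_right_eq m j
    have h2 : (m+1).choose (j+1) = m.choose j + m.choose (j+1) := Nat.choose_succ_succ m j
    calc (m - j) * ((m+1).choose (j+1))
        = m.choose j * (m - j) + (m - j) * m.choose (j+1) := by rw [h2]; ring
      _ = (j+1) * m.choose (j+1) + (m - j) * m.choose (j+1) := by rw [← h1]; ring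
      _ = ((j+1) + (m - j)) * m.choose (j+1) := by ring
      _ = (m+1) * m.choose (j+1) := by congr 1; omega
  have r1 : ((j:ℝ)+1) * (((m+1).choose (j+1) : ℕ) : ℝ) = ((m:ℝ)+1) * (m.choose j : ℝ) := by
    exact_mod_cast congrArg (Nat.cast : ℕ → ℝ) id1
  have r2 : ((m:ℝ) - j) * (((m+1).choose (j+1) : ℕ) : ℝ) = ((m:ℝ)+1) * (m.choose (j+1) : ℝ) := by
    have := congrArg (Nat.cast : ℕ → ℝ) id2
    push_cast [Nat.cast_sub (show j ≤ m by omega)] at this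
    exact_mod_cast this
  rw [← r1, ← r2]
  ring

lemma epa_binom_abs (m : ℕ) :
    ∑ j ∈ Finset.range (m+2), (((m+1).choose j : ℕ) : ℝ) * |((m:ℝ)+1) - 2*(j:ℝ)| =
      2*((m:ℝ)+1) * ((m.choose (m/2) : ℕ) : ℝ) := by
  set G : ℕ → ℝ := fun j => ((m:ℝ)+1) * (m.choose j : ℝ) with hG
  have gmono : ∀ j, j < m/2 → G j ≤ G (j+1) := by
    intro j hj
    have : m.choose j ≤ m.choose (j+1) := Nat.choose_le_succ_of_lt_half_left hj
    have : (m.choose j : ℝ) ≤ (m.choose (j+1) : ℝ) := by exact_mod_cast this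
    simp only [hG]
    nlinarith
  have ganti : ∀ j, m/2 ≤ j → G (j+1) ≤ G j := by
    intro j hj
    have : m.choose (j+1) ≤ m.choose j := epa_dec m j hj
    have : (m.choose (j+1) : ℝ) ≤ (m.choose j : ℝ) := by exact_mod_cast this
    simp only [hG]
    nlinarith
  have key : ∀ j ∈ Finset.range (m+1),
      (((m+1).choose (j+1) : ℕ) : ℝ) * |((m:ℝ)+1) - 2*((j:ℕ)+1:ℝ)| = |G j - G (j+1)| := by
    intro j hj
    rw [Finset.mem_range] at hj
    have e : G j - G (j+1) = ((2*(j:ℝ)+2) - ((m:ℝ)+1)) * (((m+1).choose (j+1) : ℕ) : ℝ) := by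
      simp only [hG]
      exact epa_G_id m j hj
    rw [e, abs_mul, abs_of_nonneg (show (0:ℝ) ≤ (((m+1).choose (j+1) : ℕ) : ℝ) by positivity),
      mul_comm]
    congr 1
    rw [abs_sub_comm]
    congr 1
    push_cast
    ring
  have peel : ∑ j ∈ Finset.range (m+2), (((m+1).choose j : ℕ) : ℝ) * |((m:ℝ)+1) - 2*(j:ℝ)|
      = (∑ j ∈ Finset.range (m+1),
          (((m+1).choose (j+1) : ℕ) : ℝ) * |((m:ℝ)+1) - 2*((j:ℕ)+1:ℝ)|)
        + (((m+1).choose 0 : ℕ) : ℝ) * |((m:ℝ)+1) - 2*((0:ℕ):ℝ)| := by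
    rw [Finset.sum_range_succ' (fun j => (((m+1).choose j : ℕ) : ℝ) * |((m:ℝ)+1) - 2*(j:ℝ)|) (m+1)]
    congr 1
    apply Finset.sum_congr rfl
    intro i _
    congr 2
    push_cast
    ring
  rw [peel, Finset.sum_congr rfl key]
  have split : ∑ j ∈ Finset.range (m+1), |G j - G (j+1)| =
      (∑ j ∈ Finset.Ico 0 (m/2), |G j - G (j+1)|) +
      ∑ j ∈ Finset.Ico (m/2) (m+1), |G j - G (j+1)| := by
    rw [Finset.sum_Ico_consecutive _ (Nat.zero_le _) (by omega), ← Finset.range_eq_Ico]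
  have inc : ∑ j ∈ Finset.Ico 0 (m/2), |G j - G (j+1)| = G (m/2) - G 0 := by
    have congr1 : ∀ j ∈ Finset.Ico 0 (m/2), |G j - G (j+1)| = G (j+1) - G j := by
      intro j hj
      rw [Finset.mem_Ico] at hj
      rw [abs_sub_comm, abs_of_nonneg (sub_nonneg.2 (gmono j hj.2))]
    rw [Finset.sum_congr rfl congr1, ← Finset.range_eq_Ico, Finset.sum_range_sub G]
  have dec : ∑ j ∈ Finset.Ico (m/2) (m+1), |G j - G (j+1)| = G (m/2) := by
    have congr2 : ∀ j ∈ Finset.Ico (m/2) (m+1), |G j - G (j+1)| = G j - G (j+1) := by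
      intro j hj
      rw [Finset.mem_Ico] at hj
      rw [abs_of_nonneg (sub_nonneg.2 (ganti j hj.1))]
    rw [Finset.sum_congr rfl congr2, Finset.sum_Ico_eq_sum_range]
    have e0 : ∀ k ∈ Finset.range (m+1 - m/2),
        G (m/2 + k) - G (m/2 + k + 1)
          = (fun i => G (m/2 + i)) k - (fun i => G (m/2 + i)) (k+1) := by
      intro k _
      simp [Nat.add_assoc]
    rw [Finset.sum_congr rfl e0, Finset.sum_range_sub' (fun i => G (m/2 + i)) (m+1 - m/2)]
    have e1 : m/2 + (m+1 - m/2) = m+1 := by omega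
    simp only [e1, Nat.add_zero]
    have e2 : G (m+1) = 0 := by
      simp only [hG]
      rw [Nat.choose_eq_zero_of_lt (by omega : m < m+1)]
      simp
    rw [e2, sub_zero]
  have g0 : G 0 = (m:ℝ)+1 := by simp [hG]
  have first : (((m+1).choose 0 : ℕ) : ℝ) * |((m:ℝ)+1) - 2*((0:ℕ):ℝ)| = (m:ℝ)+1 := by
    simp [abs_of_nonneg (show (0:ℝ) ≤ (m:ℝ)+1 by positivity)]
  rw [split, inc, dec, first, g0]
  simp only [hG]
  ring

lemma epa_double (s : ℕ) : (2*s+2).choose (s+1) = 2 * (2*s+1).choose s := by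
  have h1 : (2*s+2).choose (s+1) = (2*s+1).choose s + (2*s+1).choose (s+1) :=
    Nat.choose_succ_succ (2*s+1) s
  have h2 : (2*s+1).choose (s+1) = (2*s+1).choose s := Nat.choose_symm_half s
  omega

lemma epa_ratio (s : ℕ) :
    (s+2) * ((2*s+3).choose (s+1)) = 2*(2*s+3) * ((2*s+1).choose s) := by
  have i1 : (2*s+3) * ((2*s+2).choose (s+1)) = ((2*s+3).choose (s+2)) * (s+2) := by
    have := Nat.add_one_mul_choose_eq (2*s+2) (s+1)
    simpa [show (2*s+2)+1 = 2*s+3 by ring] using this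
  have i2 : (2*s+3).choose (s+2) = (2*s+3).choose (s+1) := by
    have := Nat.choose_symm_half (s+1)
    simpa [show 2*(s+1)+1 = 2*s+3 from by ring] using this
  rw [i2, epa_double] at i1
  calc (s+2) * ((2*s+3).choose (s+1)) = ((2*s+3).choose (s+1)) * (s+2) := Nat.mul_comm _ _
    _ = (2*s+3) * (2 * (2*s+1).choose s) := i1.symm
    _ = 2*(2*s+3) * ((2*s+1).choose s) := by ring

lemma epa_even (s : ℕ) :
    (4:ℝ)^(2*s+2) ≤ (16*(s:ℝ)+16) * (((2*s+1).choose s : ℕ) : ℝ)^2 := by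
  induction s with
  | zero => norm_num
  | succ s ih =>
    set c : ℝ := (((2*s+1).choose s : ℕ) : ℝ) with hc
    set c' : ℝ := (((2*s+3).choose (s+1) : ℕ) : ℝ) with hc'
    have R : ((s:ℝ)+2) * c' = 2*(2*(s:ℝ)+3) * c := by
      have h := congrArg (Nat.cast : ℕ → ℝ) (epa_ratio s)
      push_cast at h
      rw [hc, hc']
      push_cast
      linarith [h]
    have R2 : (((s:ℝ)+2) * c')^2 = (2*(2*(s:ℝ)+3) * c)^2 := by rw [R]
    have hcpos : (0:ℝ) ≤ c := by rw [hc]; positivity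
    have hs2 : (0:ℝ) < (s:ℝ)+2 := by positivity
    have conv1 : (2*(s+1)+1) = 2*s+3 := by ring
    have conv2 : (2*(s+1)+2) = 2*s+4 := by ring
    rw [conv1, conv2]
    rw [← hc']
    push_cast
    -- goal : 4^(2s+4) ≤ (16*(s+1)+16) * c'^2
    have step1 : 16 * (4:ℝ)^(2*s+2) * ((s:ℝ)+2) ≤ 16*((16*(s:ℝ)+16)*c^2)*((s:ℝ)+2) := by
      have := mul_le_mul_of_nonneg_right ih (le_of_lt hs2)
      nlinarith [this]
    have step2 : 16*((16*(s:ℝ)+16)*c^2)*((s:ℝ)+2) ≤ 64*(2*(s:ℝ)+3)^2*c^2 := by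
      nlinarith [sq_nonneg c]
    have step3 : 64*(2*(s:ℝ)+3)^2*c^2 = 16*((s:ℝ)+2)^2*c'^2 := by
      nlinarith [R2]
    have final : ((s:ℝ)+2) * ((4:ℝ)^(2*s+4)) ≤ ((s:ℝ)+2) * ((16*((s:ℝ)+1)+16)*c'^2) := by
      have e4 : (4:ℝ)^(2*s+4) = 16 * (4:ℝ)^(2*s+2) := by ring
      rw [e4]
      nlinarith [step1, step2, step3]
    exact le_of_mul_le_mul_left final hs2

lemma epa_L3 (k : ℕ) :
    (4:ℝ)^(k+1) ≤ 8*((k:ℝ)+1) * ((k.choose (k/2) : ℕ) : ℝ)^2 := by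
  rcases Nat.even_or_odd k with ⟨t, ht⟩ | ⟨t, ht⟩
  · -- k = 2t even, n = 2t+1 odd
    subst ht
    rcases Nat.eq_zero_or_pos t with rfl | hpos
    · norm_num
    · -- t ≥ 1 : use epa_even (s := t-1) and doubling
      obtain ⟨s, rfl⟩ : ∃ s, t = s+1 := ⟨t-1, by omega⟩
      have he := epa_even s
      rw [show (s+1)+(s+1) = 2*s+2 from by ring,
        show (2*s+2)/2 = s+1 from by omega, epa_double s]
      push_cast
      set c : ℝ := (((2*s+1).choose s : ℕ) : ℝ) with hc
      have hcpos : (0:ℝ) ≤ c := by rw [hc]; positivity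
      have e4 : (4:ℝ)^(2*s+2+1) = 4 * (4:ℝ)^(2*s+2) := by ring
      rw [e4]
      nlinarith [he, sq_nonneg c, Nat.cast_nonneg (α := ℝ) s]
  · -- k = 2t+1 odd, n = 2t+2 even
    subst ht
    rw [show 2*t+1 = 2*t+1 from rfl]
    have e2 : (2*t+1)/2 = t := by omega
    rw [e2]
    have := epa_even t
    have e3 : (4:ℝ)^(2*t+1+1) = (4:ℝ)^(2*t+2) := by norm_num
    rw [e3]
    push_cast
    calc (4:ℝ)^(2*t+2) ≤ (16*(t:ℝ)+16) * (((2*t+1).choose t : ℕ) : ℝ)^2 := this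
      _ ≤ 8*(2*(t:ℝ)+1+1) * (((2*t+1).choose t : ℕ) : ℝ)^2 := by nlinarith [sq_nonneg (((2*t+1).choose t : ℕ) : ℝ)]

lemma epa_equal (m : ℕ) :
    Real.sqrt (((m:ℝ)+1)/2) * 2^(m+1) ≤
      ∑ σ : Fin (m+1) → Bool, |∑ i, (if σ i then (1:ℝ) else -1)| := by
  have hstep : ∀ σ : Fin (m+1) → Bool,
      |∑ i, (if σ i then (1:ℝ) else -1)|
        = (fun j : ℕ => |((m:ℝ)+1) - 2*(j:ℝ)|) (∑ i, if σ i then 1 else 0) := by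
    intro σ
    have e1 : ∑ i, (if σ i then (1:ℝ) else -1)
        = 2*((∑ i, if σ i then 1 else 0 : ℕ) : ℝ) - ((m:ℝ)+1) := by
      have e0 : ∀ i, (if σ i then (1:ℝ) else -1) = 2*(if σ i then (1:ℝ) else 0) - 1 := by
        intro i
        by_cases h : σ i <;> norm_num [h]
      rw [Finset.sum_congr rfl (fun i _ => e0 i), Finset.sum_sub_distrib, ← Finset.mul_sum]
      push_cast
      simp [Finset.sum_const, Fintype.card_fin, apply_ite (Nat.cast : ℕ → ℝ)]
    rw [e1, abs_sub_comm]
  rw [Finset.sum_congr rfl (fun σ _ => hstep σ), epa_sum_weight (m+1)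
    (fun j : ℕ => |((m:ℝ)+1) - 2*(j:ℝ)|)]
  have e2 : ∑ j ∈ Finset.range (m+1+1), ((m+1).choose j : ℝ) * |((m:ℝ)+1) - 2*(j:ℝ)|
      = 2*((m:ℝ)+1) * ((m.choose (m/2) : ℕ) : ℝ) := epa_binom_abs m
  rw [e2]
  -- now: sqrt((m+1)/2) * 2^(m+1) ≤ 2(m+1) c
  set c : ℝ := ((m.choose (m/2) : ℕ) : ℝ) with hc
  have hcpos : (0:ℝ) ≤ c := by rw [hc]; positivity
  have hL3 := epa_L3 m
  have hsq : (((m:ℝ)+1)/2) ≤ (2*((m:ℝ)+1) * c / 2^(m+1))^2 := by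
    rw [div_pow]
    rw [le_div_iff₀ (by positivity : (0:ℝ) < ((2:ℝ)^(m+1))^2)]
    have e4 : ((2:ℝ)^(m+1))^2 = (4:ℝ)^(m+1) := by
      rw [← pow_mul, show (m+1)*2 = 2*(m+1) from by ring, pow_mul]
      norm_num
    rw [e4]
    calc ((m:ℝ)+1)/2 * (4:ℝ)^(m+1)
        ≤ ((m:ℝ)+1)/2 * (8*((m:ℝ)+1) * c^2) := by
          apply mul_le_mul_of_nonneg_left hL3 (by positivity)
      _ = (2*((m:ℝ)+1) * c)^2 := by ring
  calc Real.sqrt (((m:ℝ)+1)/2) * 2^(m+1)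
      ≤ Real.sqrt ((2*((m:ℝ)+1) * c / 2^(m+1))^2) * 2^(m+1) := by
        apply mul_le_mul_of_nonneg_right (Real.sqrt_le_sqrt hsq) (by positivity)
    _ = (2*((m:ℝ)+1) * c / 2^(m+1)) * 2^(m+1) := by
        rw [Real.sqrt_sq (by positivity)]
    _ = 2*((m:ℝ)+1) * c := by field_simp

-- shift invariance
lemma epa_shift (n : ℕ) [NeZero n] (c : Fin n → ℝ) (k : Fin n) :
    ∑ σ : Fin n → Bool, |∑ i, (if σ i then (1:ℝ) else -1) * c (i + k)|
      = ∑ σ : Fin n → Bool, |∑ i, (if σ i then (1:ℝ) else -1) * c i| := by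
  apply Fintype.sum_equiv (Equiv.arrowCongr (Equiv.addRight k) (Equiv.refl Bool))
  intro σ
  congr 1
  apply Fintype.sum_equiv (Equiv.addRight k)
  intro i
  simp

-- averaging
lemma epa_avg (n : ℕ) [NeZero n] (c : Fin n → ℝ) (hc : ∀ i, 0 ≤ c i) :
    (∑ i, c i) * (∑ σ : Fin n → Bool, |∑ i, (if σ i then (1:ℝ) else -1)|)
      ≤ (n:ℝ) * ∑ σ : Fin n → Bool, |∑ i, (if σ i then (1:ℝ) else -1) * c i| := by
  have hA : (0:ℝ) ≤ ∑ i, c i := Finset.sum_nonneg (fun i _ => hc i)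
  have pointwise : ∀ σ : Fin n → Bool,
      (∑ i, c i) * |∑ i, (if σ i then (1:ℝ) else -1)|
        ≤ ∑ k : Fin n, |∑ i, (if σ i then (1:ℝ) else -1) * c (i + k)| := by
    intro σ
    have e1 : (∑ i, c i) * (∑ i, (if σ i then (1:ℝ) else -1))
        = ∑ k : Fin n, ∑ i, (if σ i then (1:ℝ) else -1) * c (i + k) := by
      symm
      rw [Finset.sum_comm]
      have inner : ∀ i : Fin n,
          ∑ k : Fin n, (if σ i then (1:ℝ) else -1) * c (i + k)
            = (if σ i then (1:ℝ) else -1) * ∑ j, c j := by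
        intro i
        rw [← Finset.mul_sum]
        congr 1
        exact Fintype.sum_equiv (Equiv.addLeft i) _ _ (fun k => rfl)
      rw [Finset.sum_congr rfl (fun i _ => inner i), ← Finset.sum_mul]
      ring
    calc (∑ i, c i) * |∑ i, (if σ i then (1:ℝ) else -1)|
        = |(∑ i, c i) * (∑ i, (if σ i then (1:ℝ) else -1))| := by
          rw [abs_mul, abs_of_nonneg hA]
      _ = |∑ k : Fin n, ∑ i, (if σ i then (1:ℝ) else -1) * c (i + k)| := by rw [e1]
      _ ≤ ∑ k : Fin n, |∑ i, (if σ i then (1:ℝ) else -1) * c (i + k)| :=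
          Finset.abs_sum_le_sum_abs _ _
  calc (∑ i, c i) * (∑ σ : Fin n → Bool, |∑ i, (if σ i then (1:ℝ) else -1)|)
      = ∑ σ : Fin n → Bool, (∑ i, c i) * |∑ i, (if σ i then (1:ℝ) else -1)| := by
        rw [Finset.mul_sum]
    _ ≤ ∑ σ : Fin n → Bool, ∑ k : Fin n, |∑ i, (if σ i then (1:ℝ) else -1) * c (i + k)| :=
        Finset.sum_le_sum (fun σ _ => pointwise σ)
    _ = ∑ k : Fin n, ∑ σ : Fin n → Bool, |∑ i, (if σ i then (1:ℝ) else -1) * c (i + k)| :=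
        Finset.sum_comm
    _ = ∑ k : Fin n, ∑ σ : Fin n → Bool, |∑ i, (if σ i then (1:ℝ) else -1) * c i| := by
        apply Finset.sum_congr rfl
        intro k _
        exact epa_shift n c k
    _ = (n:ℝ) * ∑ σ : Fin n → Bool, |∑ i, (if σ i then (1:ℝ) else -1) * c i| := by
        rw [Finset.sum_const, Finset.card_univ, Fintype.card_fin, nsmul_eq_mul]

-- sign removal
lemma epa_sign (n : ℕ) (a : Fin n → ℝ) :
    ∑ σ : Fin n → Bool, |∑ i, (if σ i then (1:ℝ) else -1) * abs (a i)|
      = ∑ σ : Fin n → Bool, |∑ i, (if σ i then (1:ℝ) else -1) * a i| := by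
  have inv : Function.Involutive
      (fun σ : Fin n → Bool => (fun i => Bool.xor (σ i) (decide (a i < 0)))) := by
    intro σ
    funext i
    simp [Bool.xor_assoc]
  apply Fintype.sum_equiv inv.toPerm
  intro σ
  congr 1
  apply Finset.sum_congr rfl
  intro i _
  rcases lt_or_ge (a i) 0 with h | h
  · have : |a i| = -a i := abs_of_neg h
    simp only [Function.Involutive.coe_toPerm, this, h, decide_eq_true_eq]
    by_cases hs : σ i <;> simp [hs, h]
  · have : |a i| = a i := abs_of_nonneg h
    have h2 : ¬ (a i < 0) := not_lt.2 h
    simp only [Function.Involutive.coe_toPerm, this, h2]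
    by_cases hs : σ i <;> simp [hs, h2]

-- complement pairing
lemma epa_pair (n : ℕ) (a : Fin n → ℝ) :
    ∑ σ : Fin n → Bool, |∑ i, (if σ i then (1:ℝ) else -1) * a i|
      ≤ 2 * ∑ σ : Fin n → Bool, |∑ i, if σ i then a i else 0| := by
  have inv : Function.Involutive (fun σ : Fin n → Bool => (fun i => ! (σ i))) := by
    intro σ; funext i; simp
  have flip : ∑ σ : Fin n → Bool, |∑ i, if σ i then a i else 0|
      = ∑ σ : Fin n → Bool, |∑ i, if σ i then (0:ℝ) else a i| := by
    apply Fintype.sum_equiv inv.toPerm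
    intro σ
    congr 1
    apply Finset.sum_congr rfl
    intro i _
    by_cases hs : σ i <;> simp [hs]
  have point : ∀ σ : Fin n → Bool,
      |∑ i, (if σ i then (1:ℝ) else -1) * a i|
        ≤ |∑ i, if σ i then a i else 0| + |∑ i, if σ i then (0:ℝ) else a i| := by
    intro σ
    have e : ∑ i, (if σ i then (1:ℝ) else -1) * a i
        = (∑ i, if σ i then a i else 0) - (∑ i, if σ i then (0:ℝ) else a i) := by
      rw [← Finset.sum_sub_distrib]
      apply Finset.sum_congr rfl
      intro i _
      by_cases hs : σ i <;> simp [hs]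
    rw [e]
    exact abs_sub _ _
  calc ∑ σ : Fin n → Bool, |∑ i, (if σ i then (1:ℝ) else -1) * a i|
      ≤ ∑ σ : Fin n → Bool,
          (|∑ i, if σ i then a i else 0| + |∑ i, if σ i then (0:ℝ) else a i|) :=
        Finset.sum_le_sum (fun σ _ => point σ)
    _ = 2 * ∑ σ : Fin n → Bool, |∑ i, if σ i then a i else 0| := by
        rw [Finset.sum_add_distrib, ← flip]
        ring


theorem expected_abs_sum_lower (n : ℕ) (hn : 1 ≤ n) (a : Fin n → ℝ) :
    (∑ i, |a i|) / Real.sqrt (8 * n) ≤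
      (∑ σ : Fin n → Bool, |∑ i, if σ i then a i else 0|) / 2 ^ n := by
  obtain ⟨m, rfl⟩ : ∃ m, n = m + 1 := ⟨n - 1, by omega⟩
  have hnz : NeZero (m+1) := ⟨by omega⟩
  set A : ℝ := ∑ i, |a i| with hA
  have hA0 : 0 ≤ A := by rw [hA]; positivity
  set E : ℝ := ∑ σ : Fin (m+1) → Bool, |∑ i, if σ i then a i else 0| with hE
  have hE0 : 0 ≤ E := by rw [hE]; positivity
  have h4 := epa_equal m
  have h5 := epa_avg (m+1) (fun i => abs (a i)) (fun i => abs_nonneg _)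
  have h6 := epa_sign (m+1) a
  have h7 := epa_pair (m+1) a
  have key : A * (Real.sqrt (((m:ℝ)+1)/2) * 2^(m+1)) ≤ ((m:ℝ)+1) * (2 * E) := by
    calc A * (Real.sqrt (((m:ℝ)+1)/2) * 2^(m+1))
        ≤ A * ∑ σ : Fin (m+1) → Bool, |∑ i, (if σ i then (1:ℝ) else -1)| :=
          mul_le_mul_of_nonneg_left h4 hA0
      _ ≤ ((m:ℝ)+1) * ∑ σ : Fin (m+1) → Bool,
            |∑ i, (if σ i then (1:ℝ) else -1) * abs (a i)| := by
          have := h5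
          push_cast at this
          exact this
      _ = ((m:ℝ)+1) * ∑ σ : Fin (m+1) → Bool,
            |∑ i, (if σ i then (1:ℝ) else -1) * a i| := by rw [h6]
      _ ≤ ((m:ℝ)+1) * (2 * E) := by
          apply mul_le_mul_of_nonneg_left _ (by positivity : (0:ℝ) ≤ (m:ℝ)+1)
          rw [hE]
          exact h7
  rw [div_le_div_iff₀ (by positivity) (by positivity)]
  push_cast
  -- goal : A * 2^(m+1) ≤ E * Real.sqrt (8*(↑m+1))
  have hs : Real.sqrt (8*((m:ℝ)+1)) * Real.sqrt (((m:ℝ)+1)/2) = 2*((m:ℝ)+1) := by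
    rw [← Real.sqrt_mul (by positivity)]
    rw [show 8*((m:ℝ)+1) * (((m:ℝ)+1)/2) = (2*((m:ℝ)+1))^2 from by ring,
      Real.sqrt_sq (by positivity)]
  have hsp : 0 < Real.sqrt (((m:ℝ)+1)/2) := Real.sqrt_pos.2 (by positivity)
  have final : A * 2^(m+1) * Real.sqrt (((m:ℝ)+1)/2)
      ≤ (E * Real.sqrt (8*((m:ℝ)+1))) * Real.sqrt (((m:ℝ)+1)/2) := by
    calc A * 2^(m+1) * Real.sqrt (((m:ℝ)+1)/2)
        = A * (Real.sqrt (((m:ℝ)+1)/2) * 2^(m+1)) := by ring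
      _ ≤ ((m:ℝ)+1) * (2 * E) := key
      _ = (2*((m:ℝ)+1)) * E := by ring
      _ = (Real.sqrt (8*((m:ℝ)+1)) * Real.sqrt (((m:ℝ)+1)/2)) * E := by rw [hs]
      _ = (E * Real.sqrt (8*((m:ℝ)+1))) * Real.sqrt (((m:ℝ)+1)/2) := by ring
  exact le_of_mul_le_mul_right final hsp
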